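/- Consider SignGD on the loss $L(W) = \frac{1}{2}\|Wx - y\|_2^2$ with $W_0 = 0$, step sizes $\eta_t > 0$ with $\eta_t \to 0$ and $\sum_t \eta_t = \infty$, and updates $W_{t+1} = W_t - \eta_t\,\mathrm{sign}(\nabla_W L(W_t))$ (entrywise sign). Then $W_t \to W^* = y\,\mathrm{sign}(x)^\top/\|x\|_1$. -/

import Mathlib

open Filter Matrix

noncomputable def l2 {n : ℕ} (v : Fin n → ℝ) : ℝ := Real.sqrt (∑ i, v i ^ 2)
noncomputable def l1 {n : ℕ} (v : Fin n → ℝ) : ℝ := ∑ i, |v i|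
noncomputable def linf {n : ℕ} (v : Fin n → ℝ) : ℝ := ⨆ i, |v i|
noncomputable def maxNorm {m n : ℕ} (W : Matrix (Fin m) (Fin n) ℝ) : ℝ := ⨆ i, ⨆ j, |W i j|
noncomputable def spec {m n : ℕ} (W : Matrix (Fin m) (Fin n) ℝ) : ℝ :=
  sSup {c | ∃ v : Fin n → ℝ, l2 v = 1 ∧ c = l2 (W.mulVec v)}
noncomputable def l0 {n : ℕ} (v : Fin n → ℝ) : ℕ := (Finset.univ.filter fun j => v j ≠ 0).card

lemma mysign_mul (a b : ℝ) : Real.sign (a * b) = Real.sign a * Real.sign b := by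
  rcases lt_trichotomy a 0 with ha|ha|ha <;> rcases lt_trichotomy b 0 with hb|hb|hb <;>
    simp [ha, hb, Real.sign_of_pos, Real.sign_of_neg, Real.sign_zero,
      mul_pos, mul_neg_of_pos_of_neg, mul_neg_of_neg_of_pos, mul_pos_of_neg_of_neg]

lemma mysign_self_mul (r : ℝ) : Real.sign r * r = |r| := by
  rcases lt_trichotomy r 0 with h|h|h
  · rw [Real.sign_of_neg h, abs_of_neg h]; ring
  · simp [h]
  · rw [Real.sign_of_pos h, abs_of_pos h]; ring

lemma scalar_tendsto (η : ℕ → ℝ) (hpos : ∀ t, 0 < η t)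
    (hto0 : Tendsto η atTop (nhds 0))
    (hdiv : Tendsto (fun N => ∑ t ∈ Finset.range N, η t) atTop atTop)
    (b : ℕ → ℝ) (hrec : ∀ t, b (t + 1) = b t - η t * Real.sign (b t)) :
    Tendsto b atTop (nhds 0) := by
  rw [Metric.tendsto_atTop]
  intro ε hε
  obtain ⟨T, hT⟩ : ∃ T, ∀ t ≥ T, η t < ε / 4 := by
    have := (Metric.tendsto_atTop.mp hto0) (ε / 4) (by linarith)
    obtain ⟨T, hT⟩ := this
    exact ⟨T, fun t ht => by
      have := hT t ht; rw [Real.dist_eq, sub_zero] at this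
      exact lt_of_le_of_lt (le_abs_self _) this⟩
  have step : ∀ t, |b (t + 1)| ≤ max (|b t| - η t) (η t) := by
    intro t
    rcases lt_trichotomy (b t) 0 with h|h|h
    · rw [hrec, Real.sign_of_neg h, abs_le']
      constructor
      · exact le_max_of_le_right (by nlinarith)
      · exact le_max_of_le_left (by rw [abs_of_neg h]; ring_nf; nlinarith)
    · rw [hrec, h]
      simp only [Real.sign_zero, mul_zero, sub_zero, abs_zero]
      exact le_max_of_le_right (hpos t).le
    · rw [hrec, Real.sign_of_pos h, abs_le']
      constructor
      · exact le_max_of_le_left (by rw [abs_of_pos h]; nlinarith)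
      · exact le_max_of_le_right (by nlinarith)
  have inv : ∀ t, T ≤ t → |b t| ≤ ε / 2 → ∀ s, |b (t + s)| ≤ ε / 2 := by
    intro t htT hbt s
    induction s with
    | zero => simpa using hbt
    | succ s ih =>
      have hη : η (t + s) < ε / 4 := hT _ (le_trans htT (Nat.le_add_right _ _))
      have := step (t + s)
      rw [← Nat.add_assoc] at *
      refine le_trans this (max_le (by linarith [hpos (t + s)]) (by linarith))
  have exists_small : ∃ t, T ≤ t ∧ |b t| ≤ ε / 2 := by
    by_contra hcon
    push_neg at hcon
    have dec : ∀ k, |b (T + k)| ≤ |b T| - ∑ i ∈ Finset.range k, η (T + i) := by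
      intro k
      induction k with
      | zero => simp
      | succ k ih =>
        have hbig : ε / 2 < |b (T + k)| := hcon _ (Nat.le_add_right _ _)
        have hη : η (T + k) < ε / 4 := hT _ (Nat.le_add_right _ _)
        have hmax : max (|b (T + k)| - η (T + k)) (η (T + k)) = |b (T + k)| - η (T + k) :=
          max_eq_left (by linarith)
        have := step (T + k)
        rw [hmax] at this
        rw [← Nat.add_assoc, Finset.sum_range_succ]
        calc |b (T + k + 1)| ≤ |b (T + k)| - η (T + k) := this
          _ ≤ |b T| - (∑ i ∈ Finset.range k, η (T + i)) - η (T + k) := by linarith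
          _ = |b T| - ((∑ i ∈ Finset.range k, η (T + i)) + η (T + k)) := by ring
    have htail : Tendsto (fun k => ∑ i ∈ Finset.range k, η (T + i)) atTop atTop := by
      have h1 : ∀ k, ∑ i ∈ Finset.range k, η (T + i)
          = (∑ t ∈ Finset.range (T + k), η t) - ∑ t ∈ Finset.range T, η t := by
        intro k; rw [Finset.sum_range_add]; ring
      simp only [h1, sub_eq_add_neg]
      have h2 : Tendsto (fun k => ∑ t ∈ Finset.range (T + k), η t) atTop atTop := by
        have := hdiv.comp (tendsto_add_atTop_nat T)
        simpa [Function.comp_def, Nat.add_comm] using this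
      exact h2.atTop_add tendsto_const_nhds
    obtain ⟨k, hk⟩ := (htail.eventually_gt_atTop (|b T|)).exists
    have h1 := dec k
    have h2 := hcon _ (Nat.le_add_right T k)
    linarith
  obtain ⟨t0, ht0T, ht0⟩ := exists_small
  refine ⟨t0, fun t ht => ?_⟩
  have := inv t0 ht0T ht0 (t - t0)
  rw [Nat.add_sub_cancel' ht] at this
  rw [Real.dist_eq, sub_zero]
  linarith

noncomputable def aSeq (η : ℕ → ℝ) (S : ℝ) {m : ℕ} (y : Fin m → ℝ) : ℕ → Fin m → ℝ
  | 0 => fun _ => 0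
  | t + 1 => fun i => aSeq η S y t i - η t * Real.sign (aSeq η S y t i * S - y i)

theorem stmt5 {m n : ℕ} (x : Fin n → ℝ) (hx : x ≠ 0) (y : Fin m → ℝ)
    (η : ℕ → ℝ) (hpos : ∀ t, 0 < η t)
    (hto0 : Tendsto η atTop (nhds 0))
    (hdiv : Tendsto (fun N => ∑ t ∈ Finset.range N, η t) atTop atTop)
    (W : ℕ → Matrix (Fin m) (Fin n) ℝ) (hW0 : W 0 = 0)
    (hrec : ∀ t i j, W (t + 1) i j
      = W t i j - η t * Real.sign (((W t).mulVec x i - y i) * x j)) :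
    Tendsto W atTop (nhds (Matrix.of fun i j => y i * Real.sign (x j) / l1 x)) := by
  set S := l1 x with hSdef
  have hS : 0 < S := by
    obtain ⟨j, hj⟩ := Function.ne_iff.mp hx
    exact Finset.sum_pos' (fun j _ => abs_nonneg _)
      ⟨j, Finset.mem_univ j, abs_pos.mpr hj⟩
  set a := aSeq η S y with ha
  have hform : ∀ t i j, W t i j = a t i * Real.sign (x j) := by
    intro t
    induction t with
    | zero => intro i j; simp [hW0, ha, aSeq]
    | succ t ih =>
      intro i j
      have hmv : (W t).mulVec x i = a t i * S := by
        simp only [Matrix.mulVec, dotProduct]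
        calc ∑ j, W t i j * x j = ∑ j, a t i * (Real.sign (x j) * x j) := by
              refine Finset.sum_congr rfl fun j _ => ?_; rw [ih i j]; ring
          _ = a t i * ∑ j, |x j| := by rw [← Finset.mul_sum]; simp [mysign_self_mul]
          _ = a t i * S := rfl
      rw [hrec, ih i j, hmv, mysign_mul]
      show _ = a (t + 1) i * _
      rw [ha]
      show _ = (aSeq η S y t i - η t * Real.sign (aSeq η S y t i * S - y i)) * _
      rw [← ha]
      ring
  have hai : ∀ i, Tendsto (fun t => a t i) atTop (nhds (y i / S)) := by
    intro i
    rw [← tendsto_sub_nhds_zero_iff]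
    refine scalar_tendsto η hpos hto0 hdiv _ fun t => ?_
    have hb : a t i * S - y i = (a t i - y i / S) * S := by
      field_simp
    have hsign : Real.sign (a t i * S - y i) = Real.sign (a t i - y i / S) := by
      rw [hb, mysign_mul, Real.sign_of_pos hS, mul_one]
    rw [ha]
    show aSeq η S y t i - η t * Real.sign (aSeq η S y t i * S - y i) - y i / S = _
    rw [← ha, hsign]
    ring
  apply tendsto_pi_nhds.mpr
  intro i
  rw [tendsto_pi_nhds]
  intro j
  simp only [Matrix.of_apply]
  have : Tendsto (fun t => a t i * Real.sign (x j)) atTop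
      (nhds (y i / S * Real.sign (x j))) := (hai i).mul tendsto_const_nhds
  have heq : y i * Real.sign (x j) / S = y i / S * Real.sign (x j) := by ring
  rw [heq]
  simpa only [← hform] using this
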